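/- Let M be a real symmetric n×n matrix with spectral decomposition M = Σ_{k=1}^n μ_k u_k u_kᵀ, where μ_1 ≥ μ_2 ≥ … ≥ μ_n are its eigenvalues and u_1, …, u_n an orthonormal basis of eigenvectors. Fix L̂ ∈ ℕ and let ρ := min(L̂, number of strictly positive eigenvalues of M). Then the matrix P_{L̂}(M) := Σ_{k=1}^{ρ} μ_k u_k u_kᵀ satisfies ‖M − P_{L̂}(M)‖_F ≤ ‖M − N‖_F for every real symmetric positive semidefinite n×n matrix N with rank(N) ≤ L̂; that is, the truncated eigendecomposition is a Frobenius-norm projection of M onto the set of positive semidefinite matrices of rank at most L̂. -/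

import Mathlib

open MeasureTheory Finset
open scoped ENNReal

noncomputable section

/-- A labeled data point z = (x, y) ∈ ℝ^d × ℝ^L. -/
abbrev Pt (d L : ℕ) := (Fin d → ℝ) × (Fin L → ℝ)

/-- Inner product ⟨y, y'⟩ of label vectors. -/
def ipY {L : ℕ} (y y' : Fin L → ℝ) : ℝ := ∑ i, y i * y' i

/-- Bilinear form xᵀ A x'. -/
def qForm {d : ℕ} (A : Matrix (Fin d) (Fin d) ℝ) (x x' : Fin d → ℝ) : ℝ :=
  ∑ i, ∑ j, x i * A i j * x' j

/-- Euclidean norm ‖x‖₂. -/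
def norm2 {d : ℕ} (x : Fin d → ℝ) : ℝ := Real.sqrt (∑ i, x i ^ 2)

/-- Frobenius norm ‖A‖_F. -/
def frobNorm {d : ℕ} (A : Matrix (Fin d) (Fin d) ℝ) : ℝ :=
  Real.sqrt (∑ i, ∑ j, (A i j) ^ 2)

/-- Loss ℓ(A; z, z') := g(⟨y, y'⟩)·(⟨y, y'⟩ − xᵀ A x')² + λ·Tr(A). -/
def lossFn {d L : ℕ} (g : ℝ → ℝ) (lam : ℝ) (A : Matrix (Fin d) (Fin d) ℝ)
    (z z' : Pt d L) : ℝ :=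
  g (ipY z.2 z'.2) * (ipY z.2 z'.2 - qForm A z.1 z'.1) ^ 2 + lam * A.trace

/-- Empirical risk L̂(A; D) := (1/(n(n−1))) Σᵢ Σ_{j≠i} ℓ(A; zᵢ, zⱼ). -/
def empRisk {d L : ℕ} (g : ℝ → ℝ) (lam : ℝ) {n : ℕ} (A : Matrix (Fin d) (Fin d) ℝ)
    (D : Fin n → Pt d L) : ℝ :=
  (1 / ((n : ℝ) * ((n : ℝ) - 1))) * ∑ i, ∑ j ∈ univ.erase i, lossFn g lam A (D i) (D j)

/-- Population risk L(A) := E_{z,z' i.i.d. ∼ P}[ℓ(A; z, z')]. -/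
def popRisk {d L : ℕ} (g : ℝ → ℝ) (lam : ℝ) (P : Measure (Pt d L))
    (A : Matrix (Fin d) (Fin d) ℝ) : ℝ :=
  ∫ z, (∫ z', lossFn g lam A z z' ∂P) ∂P

/-- Risk relative to the training set, L̃(A; D) := (1/n) Σₖ E_{z∼P}[ℓ(A; z, zₖ)]. -/
def tilRisk {d L : ℕ} (g : ℝ → ℝ) (lam : ℝ) (P : Measure (Pt d L)) {n : ℕ}
    (A : Matrix (Fin d) (Fin d) ℝ) (D : Fin n → Pt d L) : ℝ :=
  (1 / (n : ℝ)) * ∑ k, ∫ z, lossFn g lam A z (D k) ∂P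

/-- Law of a Rademacher random variable: uniform on {−1, +1}. -/
def radMeasure : Measure ℝ :=
  (2⁻¹ : ℝ≥0∞) • Measure.dirac (-1) + (2⁻¹ : ℝ≥0∞) • Measure.dirac 1



section EckartAux
variable {n : ℕ}

lemma swap4EY (F : Fin n → Fin n → Fin n → Fin n → ℝ) :
    ∑ a, ∑ b, ∑ k, ∑ j, F a b k j = ∑ k, ∑ j, ∑ a, ∑ b, F a b k j :=
  calc ∑ a, ∑ b, ∑ k, ∑ j, F a b k j
      = ∑ a, ∑ k, ∑ b, ∑ j, F a b k j :=
        Finset.sum_congr rfl fun _ _ => Finset.sum_comm ..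
    _ = ∑ k, ∑ a, ∑ b, ∑ j, F a b k j := Finset.sum_comm ..
    _ = ∑ k, ∑ a, ∑ j, ∑ b, F a b k j :=
        Finset.sum_congr rfl fun _ _ => Finset.sum_congr rfl fun _ _ => Finset.sum_comm ..
    _ = ∑ k, ∑ j, ∑ a, ∑ b, F a b k j :=
        Finset.sum_congr rfl fun _ _ => Finset.sum_comm ..

lemma expandSumEY (α β : Fin n → ℝ) (f g : Fin n → Fin n → ℝ) :
    ∑ a, ∑ b, (∑ k, α k * (f k a * f k b)) * (∑ j, β j * (g j a * g j b))
      = ∑ k, ∑ j, α k * β j * (∑ a, f k a * g j a) ^ 2 := by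
  have h1 : ∀ a b : Fin n, (∑ k, α k * (f k a * f k b)) * (∑ j, β j * (g j a * g j b))
      = ∑ k, ∑ j, (α k * (f k a * f k b)) * (β j * (g j a * g j b)) := fun a b =>
    Finset.sum_mul_sum _ _ _ _
  simp only [h1]
  rw [swap4EY (fun a b k j => (α k * (f k a * f k b)) * (β j * (g j a * g j b)))]
  refine Finset.sum_congr rfl fun k _ => Finset.sum_congr rfl fun j _ => ?_
  rw [sq, Finset.sum_mul_sum]
  simp only [Finset.mul_sum]
  exact Finset.sum_congr rfl fun a _ => Finset.sum_congr rfl fun b _ => by ring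

lemma dualOrthEY (u : Fin n → Fin n → ℝ)
    (h : ∀ k l : Fin n, (∑ i, u k i * u l i) = if k = l then 1 else 0) :
    ∀ i i' : Fin n, (∑ k, u k i * u k i') = if i = i' then 1 else 0 := by
  have hUU : (Matrix.of u) * (Matrix.of u).transpose = 1 := by
    ext k l
    simpa [Matrix.mul_apply, Matrix.one_apply] using h k l
  have h2 : (Matrix.of u).transpose * (Matrix.of u) = 1 := mul_eq_one_comm.mp hUU
  intro i i'
  have h3 := congrFun (congrFun h2 i) i'
  simpa [Matrix.mul_apply, Matrix.one_apply] using h3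

lemma collapseOrthEY (α β : Fin n → ℝ) (u : Fin n → Fin n → ℝ)
    (h : ∀ k l : Fin n, (∑ i, u k i * u l i) = if k = l then 1 else 0) :
    ∑ k, ∑ j, α k * β j * (∑ a, u k a * u j a) ^ 2 = ∑ k, α k * β k := by
  simp only [h]
  refine Finset.sum_congr rfl fun k _ => ?_
  have h2 : ∀ j : Fin n, α k * β j * (if k = j then 1 else 0) ^ 2
      = if j = k then α k * β k else 0 := by
    intro j
    by_cases hj : j = k
    · simp [hj]
    · rw [if_neg (fun h' : k = j => hj h'.symm), if_neg hj]
      ring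
  simp only [h2, Finset.sum_ite_eq' univ k, Finset.mem_univ, if_true]

lemma parsevalEY (u : Fin n → Fin n → ℝ)
    (h2 : ∀ i i' : Fin n, (∑ k, u k i * u k i') = if i = i' then 1 else 0)
    (x : Fin n → ℝ) :
    ∑ k, (∑ a, u k a * x a) ^ 2 = ∑ a, x a * x a := by
  simp only [sq, Finset.sum_mul_sum]
  rw [Finset.sum_comm]
  have h3 : ∀ a : Fin n, ∑ k, ∑ b, (u k a * x a) * (u k b * x b)
      = ∑ b, (∑ k, u k a * u k b) * (x a * x b) := by
    intro a
    rw [Finset.sum_comm]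
    refine Finset.sum_congr rfl fun b _ => ?_
    rw [Finset.sum_mul]
    exact Finset.sum_congr rfl fun k _ => by ring
  simp only [h3, h2]
  refine Finset.sum_congr rfl fun a _ => ?_
  simp only [ite_mul, one_mul, zero_mul, Finset.sum_ite_eq univ a, Finset.mem_univ, if_true]

lemma jensenEY (c x : Fin n → ℝ) (hc0 : ∀ k, 0 ≤ c k) (hc1 : ∑ k, c k = 1) :
    (∑ k, c k * x k) ^ 2 ≤ ∑ k, c k * x k ^ 2 := by
  have h := Finset.sum_mul_sq_le_sq_mul_sq univ (fun k => Real.sqrt (c k))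
    (fun k => Real.sqrt (c k) * x k)
  have h1 : ∀ k, Real.sqrt (c k) * (Real.sqrt (c k) * x k) = c k * x k := fun k => by
    rw [← mul_assoc, Real.mul_self_sqrt (hc0 k)]
  have h2 : ∀ k, (Real.sqrt (c k)) ^ 2 = c k := fun k => Real.sq_sqrt (hc0 k)
  have h3 : ∀ k, (Real.sqrt (c k) * x k) ^ 2 = c k * x k ^ 2 := fun k => by
    rw [mul_pow, h2]
  simp only [h1, h2, h3] at h
  rwa [hc1, one_mul] at h

lemma downclosedEY (S : Finset (Fin n)) (hS : ∀ k l : Fin n, k ≤ l → l ∈ S → k ∈ S) :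
    S = univ.filter fun k : Fin n => (k : ℕ) < S.card := by
  ext k
  simp only [Finset.mem_filter, Finset.mem_univ, true_and]
  constructor
  · intro hk
    have h1 : Finset.Iic k ⊆ S := fun l hl => hS l k (Finset.mem_Iic.mp hl) hk
    have := Finset.card_le_card h1
    rw [Fin.card_Iic] at this
    omega
  · intro hk
    by_contra hkS
    have h1 : S ⊆ Finset.Iio k := by
      intro l hl
      rw [Finset.mem_Iio]
      by_contra h
      exact hkS (hS k l (not_lt.mp h) hl)
    have := Finset.card_le_card h1
    rw [Fin.card_Iio] at this
    omega

lemma cardFilterLtEY {L : ℕ} (hL : L ≤ n) :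
    (univ.filter fun k : Fin n => (k : ℕ) < L).card = L := by
  rcases eq_or_lt_of_le hL with h | h
  · subst h
    rw [Finset.filter_true_of_mem (fun k _ => k.is_lt), Finset.card_univ, Fintype.card_fin]
  · have heq : (univ.filter fun k : Fin n => (k : ℕ) < L) = Finset.Iio ⟨L, h⟩ := by
      ext k
      simp [Fin.lt_def]
    rw [heq, Fin.card_Iio]

lemma sumWeightLeEY {L : ℕ} (w t : Fin n → ℝ) (hw : Antitone w) (hw0 : ∀ k, 0 ≤ w k)
    (ht0 : ∀ k, 0 ≤ t k) (ht1 : ∀ k, t k ≤ 1) (htL : ∑ k, t k ≤ L) :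
    ∑ k, t k * w k ≤ ∑ k ∈ univ.filter (fun k : Fin n => (k : ℕ) < L), w k := by
  rcases le_or_gt n L with h | h
  · have hfilter : (univ.filter fun k : Fin n => (k : ℕ) < L) = univ :=
      Finset.filter_true_of_mem fun k _ => lt_of_lt_of_le (Fin.is_lt k) h
    rw [hfilter]
    exact Finset.sum_le_sum fun k _ => by nlinarith [hw0 k, ht1 k, ht0 k]
  · set l : Fin n := ⟨L, h⟩ with hl
    have key : ∀ k : Fin n, t k * w k ≤ w l * t k + (if (k : ℕ) < L then w k - w l else 0) := by
      intro k
      by_cases hk : (k : ℕ) < L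
      · simp only [hk, if_true]
        have hwk : w l ≤ w k := hw (Fin.le_def.mpr (le_of_lt hk))
        nlinarith [ht1 k, ht0 k]
      · simp only [hk, if_false]
        have hwk : w k ≤ w l := hw (Fin.le_def.mpr (not_lt.mp hk))
        nlinarith [ht0 k, hw0 k]
    calc ∑ k, t k * w k ≤ ∑ k, (w l * t k + (if (k : ℕ) < L then w k - w l else 0)) :=
          Finset.sum_le_sum fun k _ => key k
      _ = w l * (∑ k, t k) + ∑ k ∈ univ.filter (fun k : Fin n => (k : ℕ) < L), (w k - w l) := by
          rw [Finset.sum_add_distrib, ← Finset.mul_sum, Finset.sum_ite, Finset.sum_const_zero,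
            add_zero]
      _ ≤ w l * L + ∑ k ∈ univ.filter (fun k : Fin n => (k : ℕ) < L), (w k - w l) := by
          have := mul_le_mul_of_nonneg_left htL (hw0 l)
          linarith
      _ = ∑ k ∈ univ.filter (fun k : Fin n => (k : ℕ) < L), w k := by
          rw [Finset.sum_sub_distrib, Finset.sum_const, cardFilterLtEY (le_of_lt h),
            nsmul_eq_mul]
          ring

end EckartAux

theorem stmt17 {n : ℕ} (M : Matrix (Fin n) (Fin n) ℝ) (hM : M.IsSymm)
    (mu : Fin n → ℝ) (u : Fin n → (Fin n → ℝ))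
    (hanti : Antitone mu)
    (horth : ∀ k l : Fin n, (∑ i, u k i * u l i) = if k = l then 1 else 0)
    (hspec : M = ∑ k, mu k • Matrix.vecMulVec (u k) (u k))
    (Lhat : ℕ)
    (rho : ℕ) (hrho : rho = min Lhat (Finset.univ.filter fun k : Fin n => 0 < mu k).card)
    (PM : Matrix (Fin n) (Fin n) ℝ)
    (hPM : PM = ∑ k ∈ Finset.univ.filter (fun k : Fin n => (k : ℕ) < rho),
      mu k • Matrix.vecMulVec (u k) (u k)) :
    ∀ N : Matrix (Fin n) (Fin n) ℝ, N.PosSemidef → N.rank ≤ Lhat →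
      frobNorm (M - PM) ≤ frobNorm (M - N) := by
  intro N hN hrank
  -- eigendata of N
  have hNH : N.IsHermitian := hN.1
  set lam : Fin n → ℝ := hNH.eigenvalues with hlam
  set v : Fin n → Fin n → ℝ := fun j => ⇑(hNH.eigenvectorBasis j) with hvdef
  have hlam0 : ∀ j, 0 ≤ lam j := hN.eigenvalues_nonneg
  have hvorth : ∀ j j', (∑ i, v j i * v j' i) = if j = j' then 1 else 0 := by
    intro j j'
    have h := orthonormal_iff_ite.mp hNH.eigenvectorBasis.orthonormal j j'
    simpa [PiLp.inner_apply, RCLike.inner_apply, conj_trivial, hvdef, mul_comm] using h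
  have hNspec : ∀ a b, N a b = ∑ j, lam j * (v j a * v j b) := by
    intro a b
    conv_lhs => rw [hNH.spectral_theorem]
    simp only [Unitary.conjStarAlgAut_apply, Matrix.mul_apply, Matrix.mul_diagonal, Matrix.star_apply, star_trivial,
      Matrix.IsHermitian.eigenvectorUnitary_apply, Function.comp_apply, RCLike.ofReal_real_eq_id,
      id_eq, Matrix.diagonal_apply]
    refine Finset.sum_congr rfl fun j _ => ?_
    simp only [mul_ite, mul_zero, Finset.sum_ite_eq' univ j, Finset.mem_univ, if_true]
    simp [hvdef]
    ring
  have hcardT : ((univ.filter fun j => lam j ≠ 0).card : ℕ) ≤ Lhat := by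
    rw [show (univ.filter fun j => lam j ≠ 0).card = N.rank from by
      rw [hNH.rank_eq_card_non_zero_eigs, Fintype.card_subtype]]
    exact hrank
  -- dual orthonormality
  have hU2 := dualOrthEY u horth
  have hV2 := dualOrthEY v hvorth
  -- entrywise formulas
  have hM' : ∀ a b, M a b = ∑ k, mu k * (u k a * u k b) := by
    intro a b
    rw [hspec]
    simp [Matrix.sum_apply, Matrix.vecMulVec_apply, smul_eq_mul]
  set αP : Fin n → ℝ := fun k => if (k : ℕ) < rho then 0 else mu k with hαP
  have hMPM : ∀ a b, (M - PM) a b = ∑ k, αP k * (u k a * u k b) := by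
    intro a b
    rw [Matrix.sub_apply, hM' a b, hPM]
    simp only [Matrix.sum_apply, Matrix.smul_apply, Matrix.vecMulVec_apply, smul_eq_mul]
    rw [Finset.sum_filter, ← Finset.sum_sub_distrib]
    refine Finset.sum_congr rfl fun k _ => ?_
    by_cases hk : (k : ℕ) < rho <;> simp [hαP, hk]
  -- c weights
  set c : Fin n → Fin n → ℝ := fun j k => (∑ a, u k a * v j a) ^ 2 with hc
  have hc0 : ∀ j k, 0 ≤ c j k := fun j k => sq_nonneg _
  have hcrow : ∀ j, ∑ k, c j k = 1 := by
    intro j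
    have := parsevalEY u hU2 (v j)
    rw [hc]
    simp only []
    rw [this, hvorth j j, if_pos rfl]
  have hccol : ∀ k, ∑ j, c j k = 1 := by
    intro k
    have h1 : ∀ j, c j k = (∑ a, v j a * u k a) ^ 2 := by
      intro j
      rw [hc]
      simp only []
      congr 1
      exact Finset.sum_congr rfl fun a _ => mul_comm _ _
    simp only [h1]
    rw [parsevalEY v hV2 (u k), horth k k, if_pos rfl]
  -- squared Frobenius computations
  rw [frobNorm, frobNorm]
  apply Real.sqrt_le_sqrt
  have eL : (∑ a, ∑ b, ((M - PM) a b) ^ 2) = ∑ k, αP k * αP k := by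
    simp only [hMPM, sq]
    rw [show (∑ a, ∑ b, (∑ k, αP k * (u k a * u k b)) * (∑ k, αP k * (u k a * u k b)))
        = ∑ k, ∑ j, αP k * αP j * (∑ a, u k a * u j a) ^ 2 from expandSumEY αP αP u u]
    exact collapseOrthEY αP αP u horth
  have e1 : (∑ a, ∑ b, (∑ k, mu k * (u k a * u k b)) * (∑ k, mu k * (u k a * u k b)))
      = ∑ k, mu k * mu k := by
    rw [expandSumEY mu mu u u]; exact collapseOrthEY mu mu u horth
  have e3 : (∑ a, ∑ b, (∑ j, lam j * (v j a * v j b)) * (∑ j, lam j * (v j a * v j b)))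
      = ∑ j, lam j * lam j := by
    rw [expandSumEY lam lam v v]; exact collapseOrthEY lam lam v hvorth
  have e2 : (∑ a, ∑ b, (∑ k, mu k * (u k a * u k b)) * (∑ j, lam j * (v j a * v j b)))
      = ∑ k, ∑ j, mu k * lam j * c j k := by
    rw [expandSumEY mu lam u v]
  have eR : (∑ a, ∑ b, ((M - N) a b) ^ 2)
      = (∑ k, mu k * mu k) - 2 * (∑ k, ∑ j, mu k * lam j * c j k) + ∑ j, lam j * lam j := by
    have hMN : ∀ a b : Fin n, ((M - N) a b) ^ 2
        = (∑ k, mu k * (u k a * u k b)) * (∑ k, mu k * (u k a * u k b))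
          - 2 * ((∑ k, mu k * (u k a * u k b)) * (∑ j, lam j * (v j a * v j b)))
          + (∑ j, lam j * (v j a * v j b)) * (∑ j, lam j * (v j a * v j b)) := by
      intro a b
      rw [Matrix.sub_apply, hM' a b, hNspec a b]
      ring
    simp only [hMN]
    rw [← e1, ← e2, ← e3]
    simp only [Finset.sum_add_distrib, Finset.sum_sub_distrib, ← Finset.mul_sum]
  rw [eL, eR]
  -- main inequality
  set q : Fin n → ℝ := fun j => ∑ k, mu k * c j k with hq
  set m : Fin n → ℝ := fun k => max (mu k) 0 with hm
  set T : Finset (Fin n) := univ.filter fun j => lam j ≠ 0 with hT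
  set t : Fin n → ℝ := fun k => ∑ j ∈ T, c j k with ht
  have hE : ∑ k, ∑ j, mu k * lam j * c j k = ∑ j, lam j * q j := by
    rw [Finset.sum_comm]
    refine Finset.sum_congr rfl fun j _ => ?_
    rw [hq]
    simp only []
    rw [Finset.mul_sum]
    exact Finset.sum_congr rfl fun k _ => by ring
  have step1 : 2 * (∑ j, lam j * q j) - (∑ j, lam j * lam j)
      ≤ ∑ j ∈ T, (max (q j) 0) ^ 2 := by
    have h0 : ∑ j ∈ T, (2 * (lam j * q j) - lam j * lam j)
        = ∑ j, (2 * (lam j * q j) - lam j * lam j) := by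
      refine Finset.sum_filter_of_ne fun j _ hj => fun hl : lam j = 0 => hj (by rw [hl]; ring)
    have h1 : ∑ j ∈ T, (2 * (lam j * q j) - lam j * lam j) ≤ ∑ j ∈ T, (max (q j) 0) ^ 2 := by
      refine Finset.sum_le_sum fun j _ => ?_
      rcases le_or_gt (q j) 0 with hqj | hqj
      · rw [max_eq_right hqj]
        nlinarith [hlam0 j, mul_nonneg (hlam0 j) (neg_nonneg.mpr hqj)]
      · rw [max_eq_left hqj.le]
        nlinarith [sq_nonneg (lam j - q j)]
    calc 2 * (∑ j, lam j * q j) - (∑ j, lam j * lam j)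
        = ∑ j, (2 * (lam j * q j) - lam j * lam j) := by
          rw [Finset.sum_sub_distrib, ← Finset.mul_sum]
      _ = ∑ j ∈ T, (2 * (lam j * q j) - lam j * lam j) := h0.symm
      _ ≤ _ := h1
  have step2 : ∀ j, (max (q j) 0) ^ 2 ≤ ∑ k, c j k * m k ^ 2 := by
    intro j
    have hqle : q j ≤ ∑ k, c j k * m k := by
      rw [hq]
      simp only []
      refine Finset.sum_le_sum fun k _ => ?_
      rw [mul_comm (mu k) (c j k)]
      exact mul_le_mul_of_nonneg_left (le_max_left _ _) (hc0 j k)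
    have h0 : (0 : ℝ) ≤ ∑ k, c j k * m k :=
      Finset.sum_nonneg fun k _ => mul_nonneg (hc0 j k) (le_max_right _ _)
    have hmax : max (q j) 0 ≤ ∑ k, c j k * m k := max_le hqle h0
    have hsq : (max (q j) 0) ^ 2 ≤ (∑ k, c j k * m k) ^ 2 :=
      pow_le_pow_left₀ (le_max_right _ _) hmax 2
    exact hsq.trans (jensenEY (c j) m (hc0 j) (hcrow j))
  have step3 : ∑ j ∈ T, ∑ k, c j k * m k ^ 2 = ∑ k, t k * m k ^ 2 := by
    rw [Finset.sum_comm]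
    refine Finset.sum_congr rfl fun k _ => ?_
    rw [ht]
    simp only []
    rw [Finset.sum_mul]
  have ht0 : ∀ k, 0 ≤ t k := fun k => Finset.sum_nonneg fun j _ => hc0 j k
  have ht1 : ∀ k, t k ≤ 1 := by
    intro k
    calc t k ≤ ∑ j, c j k :=
          Finset.sum_le_sum_of_subset_of_nonneg (Finset.filter_subset _ _)
            (fun j _ _ => hc0 j k)
      _ = 1 := hccol k
  have htL : ∑ k, t k ≤ (Lhat : ℝ) := by
    have : ∑ k, t k = (T.card : ℝ) := by
      rw [ht]
      simp only []
      rw [Finset.sum_comm]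
      simp only [hcrow]
      rw [Finset.sum_const, nsmul_eq_mul, mul_one]
    rw [this]
    exact_mod_cast hcardT
  have hmanti : Antitone fun k => m k ^ 2 := by
    intro k l hkl
    have h1 : m l ≤ m k := max_le_max (hanti hkl) le_rfl
    have h2 : 0 ≤ m l := le_max_right _ _
    exact pow_le_pow_left₀ h2 h1 2
  have hm0 : ∀ k, 0 ≤ m k ^ 2 := fun k => sq_nonneg _
  have step4 : ∑ k, t k * m k ^ 2
      ≤ ∑ k ∈ univ.filter (fun k : Fin n => (k : ℕ) < Lhat), m k ^ 2 :=
    sumWeightLeEY (fun k => m k ^ 2) t hmanti hm0 ht0 ht1 htL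
  -- step5 : identify the truncation sum
  have step5 : ∑ k ∈ univ.filter (fun k : Fin n => (k : ℕ) < Lhat), m k ^ 2
      = ∑ k ∈ univ.filter (fun k : Fin n => (k : ℕ) < rho), mu k * mu k := by
    have hmsq : ∀ k, m k ^ 2 = if 0 < mu k then mu k * mu k else 0 := by
      intro k
      by_cases hk : 0 < mu k
      · rw [if_pos hk, hm]
        simp only []
        rw [max_eq_left hk.le]
        ring
      · rw [if_neg hk, hm]
        simp only []
        rw [max_eq_right (not_lt.mp hk)]
        ring
    simp only [hmsq]
    rw [← Finset.sum_filter, Finset.filter_filter]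
    have hP := downclosedEY (univ.filter fun k : Fin n => 0 < mu k)
      (fun k l hkl hl => by
        simp only [Finset.mem_filter, Finset.mem_univ, true_and] at hl ⊢
        exact lt_of_lt_of_le hl (hanti hkl))
    have hiff : ∀ k : Fin n, 0 < mu k ↔
        (k : ℕ) < (univ.filter fun k : Fin n => 0 < mu k).card := by
      intro k
      constructor
      · intro h
        have : k ∈ univ.filter fun k : Fin n => 0 < mu k := by
          simp [h]
        rw [hP] at this
        simpa using this
      · intro h
        have : k ∈ univ.filter fun k : Fin n => (k : ℕ) <
            (univ.filter fun k : Fin n => 0 < mu k).card := by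
          simp [h]
        rw [← hP] at this
        simpa using this
    refine Finset.sum_congr ?_ fun _ _ => rfl
    ext k
    simp only [Finset.mem_filter, Finset.mem_univ, true_and, hiff k, hrho]
    omega
  -- conclude
  have eαP : ∑ k, αP k * αP k
      = (∑ k, mu k * mu k) - ∑ k ∈ univ.filter (fun k : Fin n => (k : ℕ) < rho), mu k * mu k := by
    rw [Finset.sum_filter, ← Finset.sum_sub_distrib]
    refine Finset.sum_congr rfl fun k _ => ?_
    by_cases hk : (k : ℕ) < rho <;> simp [hαP, hk]
  rw [eαP, hE]
  have chain : 2 * (∑ j, lam j * q j) - (∑ j, lam j * lam j)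
      ≤ ∑ k ∈ univ.filter (fun k : Fin n => (k : ℕ) < rho), mu k * mu k := by
    calc 2 * (∑ j, lam j * q j) - (∑ j, lam j * lam j)
        ≤ ∑ j ∈ T, (max (q j) 0) ^ 2 := step1
      _ ≤ ∑ j ∈ T, ∑ k, c j k * m k ^ 2 := Finset.sum_le_sum fun j _ => step2 j
      _ = ∑ k, t k * m k ^ 2 := step3
      _ ≤ ∑ k ∈ univ.filter (fun k : Fin n => (k : ℕ) < Lhat), m k ^ 2 := step4
      _ = ∑ k ∈ univ.filter (fun k : Fin n => (k : ℕ) < rho), mu k * mu k := step5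
  linarith


end
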